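/- Let X ∈ 𝓜 and Y ∈ 𝓕. Suppose: L > 0 satisfies ‖φ(A)‖ ≤ L‖A‖ for all A ∈ ℝ^{n×p}; δ > 0 satisfies ‖Xᵀφ(Z) + Zᵀφ(X)‖ ≥ δ‖Z‖ for all Z ∈ 𝓕; ‖Y − X‖ ≤ δ/(4L); and α_c ≥ 0 satisfies ‖D(C∘𝒜)(X + t(Y − X))[Z] − D(C∘𝒜)(X)[Z]‖ ≤ 2α_c L t ‖Z‖ ‖Y − X‖ for all t ∈ [0,1] and all Z ∈ 𝓕, where D(C∘𝒜)(W)[Z] denotes the Fréchet derivative of the composite C∘𝒜 at W in direction Z. Then ‖C(𝒜(Y))‖ ≤ (8 α_c L / δ²) ‖C(Y)‖². -/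

import Mathlib

open Matrix

attribute [local instance] Matrix.frobeniusNormedAddCommGroup Matrix.frobeniusNormedSpace

/-- Frobenius inner product `⟨A, B⟩ = tr(AᵀB)`. -/
noncomputable def frobInner {n p : ℕ} (A B : Matrix (Fin n) (Fin p) ℝ) : ℝ :=
  (Aᵀ * B).trace

/-- The constraint map `C(X) = Xᵀ φ(X) − I_p`. -/
noncomputable def Cmap {n p : ℕ}
    (φ : Matrix (Fin n) (Fin p) ℝ →ₗ[ℝ] Matrix (Fin n) (Fin p) ℝ)
    (X : Matrix (Fin n) (Fin p) ℝ) : Matrix (Fin p) (Fin p) ℝ :=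
  Xᵀ * φ X - 1

/-- The constraint dissolving operator `𝒜(X) = (3/2)X − (1/2)X φ(X)ᵀ X`. -/
noncomputable def Amap {n p : ℕ}
    (φ : Matrix (Fin n) (Fin p) ℝ →ₗ[ℝ] Matrix (Fin n) (Fin p) ℝ)
    (X : Matrix (Fin n) (Fin p) ℝ) : Matrix (Fin n) (Fin p) ℝ :=
  (3/2 : ℝ) • X - (1/2 : ℝ) • (X * (φ X)ᵀ * X)

/-- `𝒢 = span{X₁ᵀ X₂ : X₁, X₂ ∈ 𝓕}`. -/
noncomputable def Gspan {n p : ℕ} (𝓕 : Submodule ℝ (Matrix (Fin n) (Fin p) ℝ)) :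
    Submodule ℝ (Matrix (Fin p) (Fin p) ℝ) :=
  Submodule.span ℝ {T | ∃ X₁ ∈ 𝓕, ∃ X₂ ∈ 𝓕, T = X₁ᵀ * X₂}

section Helpers

theorem matmul_isBoundedBilinearMap (a b c : ℕ) :
    IsBoundedBilinearMap ℝ
      (fun x : Matrix (Fin a) (Fin b) ℝ × Matrix (Fin b) (Fin c) ℝ => x.1 * x.2) where
  add_left x₁ x₂ y := Matrix.add_mul x₁ x₂ y
  smul_left c x y := Matrix.smul_mul c x y
  add_right x y₁ y₂ := Matrix.mul_add x y₁ y₂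
  smul_right c x y := Matrix.mul_smul x c y
  bound := ⟨1, one_pos, fun x y => by
    simpa using Matrix.frobenius_norm_mul x y⟩

/-- Package a linear map between finite-dimensional normed spaces as a CLM. -/
noncomputable def clmOf {E F : Type*} [NormedAddCommGroup E] [NormedAddCommGroup F]
    [NormedSpace ℝ E] [NormedSpace ℝ F] [FiniteDimensional ℝ E] (f : E → F)
    (h : IsLinearMap ℝ f) : E →L[ℝ] F :=
  LinearMap.toContinuousLinearMap (IsLinearMap.mk' f h)

@[simp] theorem clmOf_apply {E F : Type*} [NormedAddCommGroup E] [NormedAddCommGroup F]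
    [NormedSpace ℝ E] [NormedSpace ℝ F] [FiniteDimensional ℝ E] (f : E → F)
    (h : IsLinearMap ℝ f) (x : E) : clmOf f h x = f x := rfl

theorem hasFDerivAt_matmul {E : Type*} [NormedAddCommGroup E] [NormedSpace ℝ E]
    {a b c : ℕ} {f : E → Matrix (Fin a) (Fin b) ℝ} {g : E → Matrix (Fin b) (Fin c) ℝ}
    {f' : E →L[ℝ] Matrix (Fin a) (Fin b) ℝ} {g' : E →L[ℝ] Matrix (Fin b) (Fin c) ℝ}
    {w : E} (hf : HasFDerivAt f f' w) (hg : HasFDerivAt g g' w) :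
    HasFDerivAt (fun w => f w * g w)
      (((matmul_isBoundedBilinearMap a b c).deriv (f w, g w)).comp (f'.prod g')) w :=
  ((matmul_isBoundedBilinearMap a b c).hasFDerivAt (f w, g w)).comp (f := fun x => (f x, g x)) w (hf.prodMk hg)

variable {n p : ℕ} (φ : Matrix (Fin n) (Fin p) ℝ →ₗ[ℝ] Matrix (Fin n) (Fin p) ℝ)

/-- The (unbundled) derivative of `Amap`. -/
noncomputable def DAfun (W z : Matrix (Fin n) (Fin p) ℝ) : Matrix (Fin n) (Fin p) ℝ :=
  (3/2 : ℝ) • z - (1/2 : ℝ) • (z * (φ W)ᵀ * W + W * (φ z)ᵀ * W + W * (φ W)ᵀ * z)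

/-- The (unbundled) derivative of `Cmap`. -/
noncomputable def DCfun (V h : Matrix (Fin n) (Fin p) ℝ) : Matrix (Fin p) (Fin p) ℝ :=
  hᵀ * φ V + Vᵀ * φ h

theorem lin_DA (W : Matrix (Fin n) (Fin p) ℝ) : IsLinearMap ℝ (DAfun φ W) := by
  constructor
  · intro x y
    simp only [DAfun, map_add, Matrix.transpose_add, Matrix.add_mul, Matrix.mul_add]
    module
  · intro c x
    simp only [DAfun, _root_.map_smul, Matrix.transpose_smul, Matrix.smul_mul, Matrix.mul_smul]
    module

theorem lin_DC (V : Matrix (Fin n) (Fin p) ℝ) : IsLinearMap ℝ (DCfun φ V) := by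
  constructor
  · intro x y
    simp only [DCfun, map_add, Matrix.transpose_add, Matrix.add_mul, Matrix.mul_add]
    module
  · intro c x
    simp only [DCfun, _root_.map_smul, Matrix.transpose_smul, Matrix.smul_mul, Matrix.mul_smul]
    module

theorem lin_transpose : IsLinearMap ℝ (Matrix.transpose :
    Matrix (Fin n) (Fin p) ℝ → Matrix (Fin p) (Fin n) ℝ) :=
  ⟨Matrix.transpose_add, Matrix.transpose_smul⟩

theorem hasFDerivAt_Amap (W : Matrix (Fin n) (Fin p) ℝ) :
    HasFDerivAt (Amap φ) (clmOf (DAfun φ W) (lin_DA φ W)) W := by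
  have hφ : HasFDerivAt (fun w : Matrix (Fin n) (Fin p) ℝ => φ w)
      (LinearMap.toContinuousLinearMap φ) W :=
    (LinearMap.toContinuousLinearMap φ).hasFDerivAt
  have hT : HasFDerivAt (fun w : Matrix (Fin n) (Fin p) ℝ => (φ w)ᵀ)
      ((clmOf _ lin_transpose).comp (LinearMap.toContinuousLinearMap φ)) W :=
    ((clmOf _ lin_transpose).hasFDerivAt).comp W hφ
  have h1 := hasFDerivAt_matmul (hasFDerivAt_id W) hT
  have h2 := hasFDerivAt_matmul h1 (hasFDerivAt_id W)
  have h3 := (((hasFDerivAt_id W).const_smul (3/2 : ℝ)).sub (h2.const_smul (1/2 : ℝ)))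
  have heq : clmOf (DAfun φ W) (lin_DA φ W)
      = (3/2 : ℝ) • ContinuousLinearMap.id ℝ _
        - (1/2 : ℝ) • (((matmul_isBoundedBilinearMap n n p).deriv (W * (φ W)ᵀ, W)).comp
            (((((matmul_isBoundedBilinearMap n p n).deriv (W, (φ W)ᵀ))).comp
              ((ContinuousLinearMap.id ℝ _).prod
                ((clmOf _ lin_transpose).comp (LinearMap.toContinuousLinearMap φ)))).prod
              (ContinuousLinearMap.id ℝ _))) := by
    refine ContinuousLinearMap.ext fun z => ?_
    simp only [clmOf_apply, ContinuousLinearMap.coe_sub', ContinuousLinearMap.coe_smul',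
      Pi.sub_apply, Pi.smul_apply, ContinuousLinearMap.comp_apply,
      ContinuousLinearMap.prod_apply, ContinuousLinearMap.id_apply,
      IsBoundedBilinearMap.deriv_apply, LinearMap.coe_toContinuousLinearMap', id_eq, DAfun]
    simp only [Matrix.add_mul, Matrix.mul_add, Matrix.mul_assoc]
    module
  rw [heq]
  exact h3

theorem hasFDerivAt_Cmap (V : Matrix (Fin n) (Fin p) ℝ) :
    HasFDerivAt (Cmap φ) (clmOf (DCfun φ V) (lin_DC φ V)) V := by
  have hφ : HasFDerivAt (fun w : Matrix (Fin n) (Fin p) ℝ => φ w)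
      (LinearMap.toContinuousLinearMap φ) V :=
    (LinearMap.toContinuousLinearMap φ).hasFDerivAt
  have hT : HasFDerivAt (fun w : Matrix (Fin n) (Fin p) ℝ => wᵀ)
      (clmOf _ lin_transpose) V := (clmOf _ lin_transpose).hasFDerivAt
  have h1 := (hasFDerivAt_matmul hT hφ).sub_const (1 : Matrix (Fin p) (Fin p) ℝ)
  have heq : clmOf (DCfun φ V) (lin_DC φ V)
      = ((matmul_isBoundedBilinearMap p n p).deriv (Vᵀ, φ V)).comp
          ((clmOf _ lin_transpose).prod (LinearMap.toContinuousLinearMap φ)) := by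
    refine ContinuousLinearMap.ext fun z => ?_
    simp only [clmOf_apply, ContinuousLinearMap.comp_apply, ContinuousLinearMap.prod_apply,
      IsBoundedBilinearMap.deriv_apply, LinearMap.coe_toContinuousLinearMap', id_eq, DCfun]
    module
  rw [heq]
  exact h1

theorem hasFDerivAt_CA (W : Matrix (Fin n) (Fin p) ℝ) :
    HasFDerivAt (fun w => Cmap φ (Amap φ w))
      ((clmOf (DCfun φ (Amap φ W)) (lin_DC φ (Amap φ W))).comp
        (clmOf (DAfun φ W) (lin_DA φ W))) W :=
  (hasFDerivAt_Cmap φ (Amap φ W)).comp W (hasFDerivAt_Amap φ W)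

theorem fderiv_CA_apply (W z : Matrix (Fin n) (Fin p) ℝ) :
    fderiv ℝ (fun w => Cmap φ (Amap φ w)) W z = DCfun φ (Amap φ W) (DAfun φ W z) := by
  erw [(hasFDerivAt_CA φ W).fderiv]; rfl

end Helpers

theorem stmt_16 {n p : ℕ} (hn : 0 < n) (hp : 0 < p)
    (φ : Matrix (Fin n) (Fin p) ℝ →ₗ[ℝ] Matrix (Fin n) (Fin p) ℝ)
    (𝓕 : Submodule ℝ (Matrix (Fin n) (Fin p) ℝ))
    (ψ : Matrix (Fin p) (Fin p) ℝ →ₗ[ℝ] Matrix (Fin p) (Fin p) ℝ)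
    (hφ𝓕 : ∀ X ∈ 𝓕, φ X ∈ 𝓕)
    (hXT : ∀ X ∈ 𝓕, ∀ T ∈ Gspan 𝓕, X * T ∈ 𝓕)
    (hφsa : ∀ A B : Matrix (Fin n) (Fin p) ℝ, frobInner (φ A) B = frobInner A (φ B))
    (hψG : ∀ T ∈ Gspan 𝓕, ψ T ∈ Gspan 𝓕)
    (hφψ : ∀ X ∈ 𝓕, ∀ T ∈ Gspan 𝓕, φ (X * T) = φ X * ψ T)
    (hψφ : ∀ X ∈ 𝓕, ψ ((φ X)ᵀ * X) = Xᵀ * φ X)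
    (X : Matrix (Fin n) (Fin p) ℝ) (hX : X ∈ 𝓕) (hX1 : Xᵀ * φ X = 1)
    (Y : Matrix (Fin n) (Fin p) ℝ) (hY : Y ∈ 𝓕)
    (L : ℝ) (hL0 : 0 < L)
    (hL : ∀ A : Matrix (Fin n) (Fin p) ℝ, ‖φ A‖ ≤ L * ‖A‖)
    (δ : ℝ) (hδ0 : 0 < δ)
    (hδ : ∀ Z ∈ 𝓕, δ * ‖Z‖ ≤ ‖Xᵀ * φ Z + Zᵀ * φ X‖)
    (hYX : ‖Y - X‖ ≤ δ / (4 * L))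
    (αc : ℝ) (hαc0 : 0 ≤ αc)
    (hlip : ∀ t ∈ Set.Icc (0 : ℝ) 1, ∀ Z ∈ 𝓕,
      ‖fderiv ℝ (fun W => Cmap φ (Amap φ W)) (X + t • (Y - X)) Z
        - fderiv ℝ (fun W => Cmap φ (Amap φ W)) X Z‖
        ≤ 2 * αc * L * t * ‖Z‖ * ‖Y - X‖) :
    ‖Cmap φ (Amap φ Y)‖ ≤ (8 * αc * L / δ ^ 2) * ‖Cmap φ Y‖ ^ 2 := by
  set Z := Y - X with hZdef
  have hZ : Z ∈ 𝓕 := Submodule.sub_mem 𝓕 hY hX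
  have hφX : (φ X)ᵀ * X = 1 := by
    have h := congrArg Matrix.transpose hX1
    simpa [Matrix.transpose_mul] using h
  have hAX : Amap φ X = X := by
    rw [Amap, Matrix.mul_assoc, hφX, Matrix.mul_one]
    module
  have hTmem : (φ Z)ᵀ * X + (φ X)ᵀ * Z ∈ Gspan 𝓕 :=
    Submodule.add_mem _ (Submodule.subset_span ⟨φ Z, hφ𝓕 Z hZ, X, hX, rfl⟩)
      (Submodule.subset_span ⟨φ X, hφ𝓕 X hX, Z, hZ, rfl⟩)
  have hψT : ψ ((φ Z)ᵀ * X + (φ X)ᵀ * Z) = Xᵀ * φ Z + Zᵀ * φ X := by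
    have h₁ := hψφ (X + Z) (Submodule.add_mem 𝓕 hX hZ)
    have h₂ := hψφ (X - Z) (Submodule.sub_mem 𝓕 hX hZ)
    have e1 : (φ (X + Z))ᵀ * (X + Z) - (φ (X - Z))ᵀ * (X - Z)
        = (2 : ℝ) • ((φ Z)ᵀ * X + (φ X)ᵀ * Z) := by
      simp only [map_add, map_sub, Matrix.transpose_add, Matrix.transpose_sub,
        Matrix.add_mul, Matrix.mul_add, Matrix.sub_mul, Matrix.mul_sub]
      module
    have e2 : (X + Z)ᵀ * φ (X + Z) - (X - Z)ᵀ * φ (X - Z)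
        = (2 : ℝ) • (Xᵀ * φ Z + Zᵀ * φ X) := by
      simp only [map_add, map_sub, Matrix.transpose_add, Matrix.transpose_sub,
        Matrix.add_mul, Matrix.mul_add, Matrix.sub_mul, Matrix.mul_sub]
      module
    have key : (2 : ℝ) • ψ ((φ Z)ᵀ * X + (φ X)ᵀ * Z) = (2 : ℝ) • (Xᵀ * φ Z + Zᵀ * φ X) := by
      calc (2 : ℝ) • ψ ((φ Z)ᵀ * X + (φ X)ᵀ * Z)
          = ψ ((2 : ℝ) • ((φ Z)ᵀ * X + (φ X)ᵀ * Z)) := (map_smul ψ _ _).symm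
        _ = ψ ((φ (X + Z))ᵀ * (X + Z)) - ψ ((φ (X - Z))ᵀ * (X - Z)) := by
            rw [← e1, map_sub]
        _ = (X + Z)ᵀ * φ (X + Z) - (X - Z)ᵀ * φ (X - Z) := by rw [h₁, h₂]
        _ = (2 : ℝ) • (Xᵀ * φ Z + Zᵀ * φ X) := e2
    exact smul_right_injective (Matrix (Fin p) (Fin p) ℝ) (two_ne_zero) key
  have hD0 : fderiv ℝ (fun w => Cmap φ (Amap φ w)) X Z = 0 := by
    rw [fderiv_CA_apply, hAX]
    set T := (φ Z)ᵀ * X + (φ X)ᵀ * Z with hTdef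
    have hTS : Tᵀ = Xᵀ * φ Z + Zᵀ * φ X := by
      rw [hTdef, Matrix.transpose_add, Matrix.transpose_mul, Matrix.transpose_mul,
        Matrix.transpose_transpose, Matrix.transpose_transpose]
    have hH : DAfun φ X Z = Z - (1/2 : ℝ) • (X * T) := by
      rw [hTdef]
      simp only [DAfun, Matrix.mul_add, Matrix.mul_assoc, hφX, Matrix.mul_one]
      module
    have hφH : φ (Z - (1/2 : ℝ) • (X * T)) = φ Z - (1/2 : ℝ) • (φ X * (Xᵀ * φ Z + Zᵀ * φ X)) := by
      rw [map_sub, _root_.map_smul, hφψ X hX T hTmem, hψT]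
    have c1 : (Z - (1/2 : ℝ) • (X * T))ᵀ * φ X
        = Zᵀ * φ X - (1/2 : ℝ) • (Xᵀ * φ Z + Zᵀ * φ X) := by
      rw [Matrix.transpose_sub, Matrix.transpose_smul, Matrix.transpose_mul,
        Matrix.sub_mul, Matrix.smul_mul, Matrix.mul_assoc, hX1, Matrix.mul_one, hTS]
    have c2 : Xᵀ * φ (Z - (1/2 : ℝ) • (X * T))
        = Xᵀ * φ Z - (1/2 : ℝ) • (Xᵀ * φ Z + Zᵀ * φ X) := by
      rw [hφH, Matrix.mul_sub, Matrix.mul_smul, ← Matrix.mul_assoc, hX1, Matrix.one_mul]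
    rw [hH]
    show DCfun φ X (Z - (1/2 : ℝ) • (X * T)) = 0
    rw [DCfun, c1, c2]
    module
  have hg : ∀ t : ℝ, HasDerivAt (fun s : ℝ => Cmap φ (Amap φ (X + s • Z)))
      (fderiv ℝ (fun w => Cmap φ (Amap φ w)) (X + t • Z) Z) t := by
    intro t
    have hline : HasDerivAt (fun s : ℝ => X + s • Z) Z t := by
      have h := ((hasDerivAt_id t).smul_const Z).const_add X
      simp only [id, one_smul] at h
      exact h
    have hFd := hasFDerivAt_CA φ (X + t • Z)
    have hcomp := hFd.comp_hasDerivAt t hline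
    erw [hFd.fderiv]; exact hcomp
  have hnormbound : ∀ t ∈ Set.Ico (0 : ℝ) 1,
      ‖fderiv ℝ (fun w => Cmap φ (Amap φ w)) (X + t • Z) Z‖ ≤ 2 * αc * L * ‖Z‖ * ‖Z‖ := by
    intro t ht
    have h1 := hlip t ⟨ht.1, ht.2.le⟩ Z hZ
    rw [hD0, sub_zero] at h1
    calc ‖fderiv ℝ (fun w => Cmap φ (Amap φ w)) (X + t • Z) Z‖
        ≤ 2 * αc * L * t * ‖Z‖ * ‖Z‖ := h1
      _ ≤ 2 * αc * L * ‖Z‖ * ‖Z‖ := by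
          nlinarith [norm_nonneg Z, ht.1, ht.2.le, hαc0, hL0.le,
            mul_nonneg (mul_nonneg hαc0 hL0.le) (mul_nonneg (norm_nonneg Z) (norm_nonneg Z))]
  have hMV := norm_image_sub_le_of_norm_deriv_le_segment_01'
    (f' := fun t => fderiv ℝ (fun w => Cmap φ (Amap φ w)) (X + t • Z) Z)
    (fun t _ => (hg t).hasDerivWithinAt) hnormbound
  have hf1 : X + (1 : ℝ) • Z = Y := by rw [one_smul, hZdef]; abel
  have hf0 : X + (0 : ℝ) • Z = X := by simp
  have hFX : Cmap φ (Amap φ X) = 0 := by rw [hAX, Cmap, hX1, sub_self]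
  simp only [hf1, hf0] at hMV
  rw [hFX, sub_zero] at hMV
  -- bound ‖Z‖ by ‖Cmap φ Y‖
  have hCY : Cmap φ Y = (Xᵀ * φ Z + Zᵀ * φ X) + Zᵀ * φ Z := by
    have hY' : Y = X + Z := by rw [hZdef]; abel
    rw [Cmap, hY', map_add, Matrix.transpose_add, Matrix.add_mul, Matrix.mul_add,
      Matrix.mul_add, hX1]
    abel
  have hZφZ : ‖Zᵀ * φ Z‖ ≤ L * ‖Z‖ * ‖Z‖ := by
    calc ‖Zᵀ * φ Z‖ ≤ ‖Zᵀ‖ * ‖φ Z‖ := Matrix.frobenius_norm_mul _ _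
      _ = ‖Z‖ * ‖φ Z‖ := by rw [Matrix.frobenius_norm_transpose]
      _ ≤ ‖Z‖ * (L * ‖Z‖) := mul_le_mul_of_nonneg_left (hL Z) (norm_nonneg Z)
      _ = L * ‖Z‖ * ‖Z‖ := by ring
  have hLZ : L * ‖Z‖ ≤ δ / 4 := by
    calc L * ‖Z‖ ≤ L * (δ / (4 * L)) := mul_le_mul_of_nonneg_left hYX hL0.le
      _ = δ / 4 := by field_simp
  have htri : ‖Xᵀ * φ Z + Zᵀ * φ X‖ ≤ ‖Cmap φ Y‖ + ‖Zᵀ * φ Z‖ := by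
    have hsplit : Xᵀ * φ Z + Zᵀ * φ X = Cmap φ Y - Zᵀ * φ Z := by rw [hCY]; abel
    rw [hsplit]
    exact norm_sub_le _ _
  have hZle : δ * ‖Z‖ ≤ ‖Cmap φ Y‖ + (δ / 4) * ‖Z‖ := by
    have h0 := hδ Z hZ
    nlinarith [hZφZ, norm_nonneg Z, hLZ]
  have hZbound : ‖Z‖ ≤ (2 / δ) * ‖Cmap φ Y‖ := by
    rw [div_mul_eq_mul_div, le_div_iff₀ hδ0]
    nlinarith [norm_nonneg (Cmap φ Y), norm_nonneg Z]
  have hcoef : (0 : ℝ) ≤ 2 * αc * L :=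
    mul_nonneg (mul_nonneg (by norm_num) hαc0) hL0.le
  have hb : (0 : ℝ) ≤ (2 / δ) * ‖Cmap φ Y‖ := by positivity
  have hs : ‖Z‖ * ‖Z‖ ≤ ((2 / δ) * ‖Cmap φ Y‖) * ((2 / δ) * ‖Cmap φ Y‖) :=
    mul_le_mul hZbound hZbound (norm_nonneg Z) hb
  calc ‖Cmap φ (Amap φ Y)‖ ≤ 2 * αc * L * ‖Z‖ * ‖Z‖ := hMV
    _ = (2 * αc * L) * (‖Z‖ * ‖Z‖) := by ring
    _ ≤ (2 * αc * L) * (((2 / δ) * ‖Cmap φ Y‖) * ((2 / δ) * ‖Cmap φ Y‖)) :=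
        mul_le_mul_of_nonneg_left hs hcoef
    _ = (8 * αc * L / δ ^ 2) * ‖Cmap φ Y‖ ^ 2 := by ring
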